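/- The linear system expressing that a 4-web with pairwise transversal foliations is geodesic determines the projective connection uniquely: if f₁,...,f₄ are functions with pairwise nonvanishing Jacobians J(fᵢ,fⱼ) = f_{i,1}f_{j,2} − f_{i,2}f_{j,1} at a point, then the 4×4 linear system Π¹₂₂ f_{i,1}³ − 3Π¹₁₂ f_{i,1}² f_{i,2} − 3Π²₁₂ f_{i,1} f_{i,2}² + Π²₁₁ f_{i,2}³ = Flex fᵢ (i = 1,...,4) for the unknowns (Π¹₂₂, Π¹₁₂, Π²₁₂, Π²₁₁) has a nonsingular coefficient matrix, and in particular a unique solution. -/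

import Mathlib

/-- The linear system expressing geodesicity of a 4-web with pairwise transversal
foliations determines the projective connection (Thomas parameters) uniquely: the
coefficient matrix with rows `(f_{i,1}³, −3f_{i,1}²f_{i,2}, −3f_{i,1}f_{i,2}², f_{i,2}³)`
is nonsingular, and the system has a unique solution. -/
theorem four_web_projective_structure_unique
    (a b F : Fin 4 → ℝ)
    (htrans : ∀ i j, i ≠ j → a i * b j - a j * b i ≠ 0) :
    (Matrix.of fun i : Fin 4 =>
        ![a i ^ 3, -3 * a i ^ 2 * b i, -3 * a i * b i ^ 2, b i ^ 3]).det ≠ 0 ∧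
    ∃! v : Fin 4 → ℝ, ∀ i : Fin 4,
      a i ^ 3 * v 0 - 3 * a i ^ 2 * b i * v 1 - 3 * a i * b i ^ 2 * v 2
        + b i ^ 3 * v 3 = F i := by
  set M : Matrix (Fin 4) (Fin 4) ℝ := Matrix.of fun i : Fin 4 =>
      ![a i ^ 3, -3 * a i ^ 2 * b i, -3 * a i * b i ^ 2, b i ^ 3] with hM
  have hdet : M.det =
      9 * ((a 0 * b 1 - a 1 * b 0) * (a 0 * b 2 - a 2 * b 0) *
        (a 0 * b 3 - a 3 * b 0) * (a 1 * b 2 - a 2 * b 1) *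
        (a 1 * b 3 - a 3 * b 1) * (a 2 * b 3 - a 3 * b 2)) := by
    have hs : (Fin.succ 2 : Fin 4) = 3 := rfl
    have hc : (Fin.castSucc 2 : Fin 4) = 2 := rfl
    simp [hM, Matrix.det_succ_row_zero, Fin.sum_univ_succ, Fin.succAbove,
      hs, hc]
    ring
  have hne : M.det ≠ 0 := by
    rw [hdet]
    have h01 := htrans 0 1 (by decide)
    have h02 := htrans 0 2 (by decide)
    have h03 := htrans 0 3 (by decide)
    have h12 := htrans 1 2 (by decide)
    have h13 := htrans 1 3 (by decide)
    have h23 := htrans 2 3 (by decide)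
    positivity
  refine ⟨hne, ?_⟩
  have hunit : IsUnit M.det := isUnit_iff_ne_zero.mpr hne
  have key : ∀ v : Fin 4 → ℝ,
      (∀ i : Fin 4,
        a i ^ 3 * v 0 - 3 * a i ^ 2 * b i * v 1 - 3 * a i * b i ^ 2 * v 2
          + b i ^ 3 * v 3 = F i) ↔ M.mulVec v = F := by
    intro v
    constructor
    · intro h
      funext i
      simp only [hM, Matrix.mulVec, dotProduct, Fin.sum_univ_four,
        Matrix.of_apply, Matrix.cons_val_zero, Matrix.cons_val_one, Matrix.head_cons,
        Matrix.cons_val_two, Matrix.tail_cons, Matrix.cons_val_three]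
      linarith [h i]
    · intro h i
      have := congrFun h i
      simp only [hM, Matrix.mulVec, dotProduct, Fin.sum_univ_four,
        Matrix.of_apply, Matrix.cons_val_zero, Matrix.cons_val_one, Matrix.head_cons,
        Matrix.cons_val_two, Matrix.tail_cons, Matrix.cons_val_three] at this
      linarith
  refine ⟨M⁻¹.mulVec F, (key _).mpr ?_, ?_⟩
  · rw [Matrix.mulVec_mulVec, Matrix.mul_nonsing_inv M hunit, Matrix.one_mulVec]
  · intro w hw
    have hw' := (key w).mp hw
    rw [← hw', Matrix.mulVec_mulVec, Matrix.nonsing_inv_mul M hunit, Matrix.one_mulVec]
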